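/- Let Δ be an irreducible root system in a Euclidean space with inner product normalized so that long roots have squared length 2, and suppose Δ is not of type G₂. If α and β are short roots with α ≠ ±β and α - β lies in the lattice generated by the long roots, then ⟨α, β⟩ = 0 and α - β is a long root. -/

import Mathlib

open scoped RealInnerProductSpace

/-- A (crystallographic, reduced) root system in a real inner product space. -/
structure IsRootSystem {E : Type*} [NormedAddCommGroup E] [InnerProductSpace ℝ E]
    (Δ : Set E) : Prop where
  finite : Δ.Finite
  nonzero : (0 : E) ∉ Δ
  spans : Submodule.span ℝ Δ = ⊤
  reflect : ∀ x ∈ Δ, ∀ y ∈ Δ, y - (2 * ⟪x, y⟫ / ⟪x, x⟫) • x ∈ Δ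
  crystallographic : ∀ x ∈ Δ, ∀ y ∈ Δ, ∃ n : ℤ, 2 * ⟪x, y⟫ / ⟪x, x⟫ = (n : ℝ)
  reduced : ∀ x ∈ Δ, ∀ c : ℝ, c • x ∈ Δ → c = 1 ∨ c = -1

/-- Irreducibility: no splitting into two nonempty mutually orthogonal parts. -/
def IsIrreducibleRootSystem {E : Type*} [NormedAddCommGroup E] [InnerProductSpace ℝ E]
    (Δ : Set E) : Prop :=
  ∀ Δ₁ Δ₂ : Set E, Δ = Δ₁ ∪ Δ₂ → (∀ x ∈ Δ₁, ∀ y ∈ Δ₂, ⟪x, y⟫ = 0) →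
    Δ₁ = ∅ ∨ Δ₂ = ∅


section Aux
variable {E : Type*} [NormedAddCommGroup E] [InnerProductSpace ℝ E]

/-- Integrality of inner product of a list sum of "long roots" with a long root. -/
lemma listsum_inner_int (S : Set E)
    (hint : ∀ x ∈ S, ∀ y ∈ S, ∃ n : ℤ, ⟪x, y⟫ = (n : ℝ))
    (l : List E) (hl : ∀ x ∈ l, x ∈ S) (γ : E) (hγ : γ ∈ S) :
    ∃ n : ℤ, ⟪l.sum, γ⟫ = (n : ℝ) := by
  induction l with
  | nil => exact ⟨0, by simp⟩
  | cons a t ih =>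
    obtain ⟨m, hm⟩ := hint a (hl a (by simp)) γ hγ
    obtain ⟨n, hn⟩ := ih (fun x hx => hl x (by simp [hx]))
    refine ⟨m + n, ?_⟩
    rw [List.sum_cons, inner_add_left, hm, hn]
    push_cast; ring

lemma listsum_even (S : Set E) (hS2 : ∀ x ∈ S, ⟪x, x⟫ = 2)
    (hint : ∀ x ∈ S, ∀ y ∈ S, ∃ n : ℤ, ⟪x, y⟫ = (n : ℝ))
    (l : List E) (hl : ∀ x ∈ l, x ∈ S) :
    ∃ n : ℤ, ⟪l.sum, l.sum⟫ = 2 * (n : ℝ) := by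
  induction l with
  | nil => exact ⟨0, by simp⟩
  | cons a t ih =>
    have ha : a ∈ S := hl a (by simp)
    have ht : ∀ x ∈ t, x ∈ S := fun x hx => hl x (by simp [hx])
    obtain ⟨m, hm⟩ := listsum_inner_int S hint t ht a ha
    obtain ⟨k, hk⟩ := ih ht
    refine ⟨1 + m + k, ?_⟩
    rw [List.sum_cons, inner_add_left, inner_add_right, inner_add_right, hS2 a ha]
    have hc : ⟪a, t.sum⟫ = (m : ℝ) := by rw [real_inner_comm]; exact hm
    rw [hc, hm, hk]; push_cast; ring

omit [InnerProductSpace ℝ E] in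
lemma map_neg_sum (l : List E) : (l.map (fun y => -y)).sum = -l.sum := by
  induction l with
  | nil => simp
  | cons a t ih => simp only [List.map_cons, List.sum_cons, neg_add]; rw [ih]

lemma exists_pos_inner (v : E) (l : List E) (h : 0 < ⟪v, l.sum⟫) :
    ∃ γ ∈ l, 0 < ⟪v, γ⟫ := by
  induction l with
  | nil => simp at h
  | cons a t ih =>
    rw [List.sum_cons, inner_add_right] at h
    by_cases ha : 0 < ⟪v, a⟫
    · exact ⟨a, by simp, ha⟩
    · obtain ⟨γ, hγ, hp⟩ := ih (by linarith)
      exact ⟨γ, by simp [hγ], hp⟩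

lemma closure_list (S : Set E) (hneg : ∀ x ∈ S, -x ∈ S) (v : E)
    (hv : v ∈ AddSubgroup.closure S) :
    ∃ l : List E, (∀ x ∈ l, x ∈ S) ∧ l.sum = v := by
  induction hv using AddSubgroup.closure_induction with
  | mem x hx => exact ⟨[x], by simp [hx]⟩
  | zero => exact ⟨[], by simp⟩
  | add x y _ _ hx hy =>
    obtain ⟨l1, h1, hs1⟩ := hx
    obtain ⟨l2, h2, hs2⟩ := hy
    refine ⟨l1 ++ l2, ?_, by simp [hs1, hs2]⟩
    intro x hx
    rcases List.mem_append.mp hx with h | h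
    · exact h1 x h
    · exact h2 x h
  | neg x _ hx =>
    obtain ⟨l, h1, hs⟩ := hx
    refine ⟨l.map (fun y => -y), ?_, ?_⟩
    · intro x hx
      obtain ⟨y, hy, rfl⟩ := List.mem_map.mp hx
      exact hneg y (h1 y hy)
    · rw [map_neg_sum, hs]

end Aux

lemma long_sum_mem {E : Type*} [NormedAddCommGroup E] [InnerProductSpace ℝ E]
    {Δ : Set E} (hrs : IsRootSystem Δ) :
    ∀ n : ℕ, ∀ l : List E, l.length = n →
      (∀ x ∈ l, x ∈ Δ ∧ ⟪x, x⟫ = 2) → ⟪l.sum, l.sum⟫ = 2 → l.sum ∈ Δ := by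
  have hint : ∀ x ∈ {x : E | x ∈ Δ ∧ ⟪x, x⟫ = 2}, ∀ y ∈ {x : E | x ∈ Δ ∧ ⟪x, x⟫ = 2},
      ∃ n : ℤ, ⟪x, y⟫ = (n : ℝ) := by
    rintro x ⟨hxΔ, hx2⟩ y ⟨hyΔ, -⟩
    obtain ⟨n, hn⟩ := hrs.crystallographic x hxΔ y hyΔ
    rw [hx2] at hn
    exact ⟨n, by linarith⟩
  intro n
  induction n using Nat.strong_induction_on with
  | _ n ih =>
    intro l hlen hl hnorm
    classical
    set v := l.sum with hv
    obtain ⟨γ, hγl, hγpos⟩ := exists_pos_inner v l (by rw [← hv, hnorm]; norm_num)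
    have hγS : γ ∈ Δ ∧ ⟪γ, γ⟫ = 2 := hl γ hγl
    obtain ⟨m, hm⟩ := listsum_inner_int _ hint l (fun x hx => hl x hx) γ hγS
    rw [← hv] at hm
    have hm0 : (0 : ℝ) < m := by rw [← hm]; exact hγpos
    have hm1 : 1 ≤ m := by exact_mod_cast hm0
    have hsub : ⟪v - γ, v - γ⟫ = 4 - 2 * m := by
      rw [inner_sub_left, inner_sub_right, inner_sub_right, hnorm, hγS.2,
        real_inner_comm v γ, hm]; ring
    have hm2 : m ≤ 2 := by
      have h0 : (0 : ℝ) ≤ ⟪v - γ, v - γ⟫ := real_inner_self_nonneg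
      rw [hsub] at h0
      have : (m : ℝ) ≤ 2 := by linarith
      exact_mod_cast this
    rcases (by omega : m = 1 ∨ m = 2) with rfl | rfl
    · -- v - γ is a long root, reflect it back
      have hts : γ + (l.erase γ).sum = v := List.sum_erase hγl
      have hts' : (l.erase γ).sum = v - γ := eq_sub_of_add_eq' hts
      have hnpos : 0 < n := hlen ▸ List.length_pos_of_mem hγl
      have hmem : v - γ ∈ Δ := by
        rw [← hts']
        refine ih (n - 1) (by omega) (l.erase γ) ?_ ?_ ?_
        · rw [List.length_erase_of_mem hγl, hlen]
        · exact fun x hx => hl x (List.mem_of_mem_erase hx)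
        · rw [hts', hsub]; norm_num
      have hcoef : 2 * ⟪γ, v - γ⟫ / ⟪γ, γ⟫ = -1 := by
        rw [inner_sub_right, hγS.2, real_inner_comm v γ, hm]; norm_num
      have hrefl := hrs.reflect γ hγS.1 (v - γ) hmem
      rw [hcoef] at hrefl
      simpa [sub_add_cancel] using hrefl
    · have : v - γ = 0 := by
        rw [← @inner_self_eq_zero ℝ, hsub]; norm_num
      rw [sub_eq_zero] at this
      rw [this]; exact hγS.1

/-- In an irreducible root system, not of type `G₂`, normalized so that
long roots have squared length `2` (hence short roots have squared length `1`),
if `α, β` are short roots with `α ≠ ±β` whose difference lies in the lattice `Q_L`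
generated by the long roots, then `⟪α, β⟫ = 0` and `α - β` is a long root. -/
theorem stmt0 {E : Type*} [NormedAddCommGroup E] [InnerProductSpace ℝ E]
    (Δ : Set E) (hrs : IsRootSystem Δ) (hirr : IsIrreducibleRootSystem Δ)
    (hnotG2 : ∀ x ∈ Δ, ⟪x, x⟫ = 2 ∨ ⟪x, x⟫ = 1)
    (α β : E) (hα : α ∈ Δ) (hβ : β ∈ Δ)
    (hαshort : ⟪α, α⟫ = 1) (hβshort : ⟪β, β⟫ = 1)
    (hne : α ≠ β) (hne' : α ≠ -β)
    (hQL : α - β ∈ AddSubgroup.closure {x | x ∈ Δ ∧ ⟪x, x⟫ = 2}) :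
    ⟪α, β⟫ = 0 ∧ α - β ∈ Δ ∧ ⟪α - β, α - β⟫ = 2 := by
  set S : Set E := {x | x ∈ Δ ∧ ⟪x, x⟫ = 2} with hSdef
  have hint : ∀ x ∈ S, ∀ y ∈ S, ∃ n : ℤ, ⟪x, y⟫ = (n : ℝ) := by
    rintro x ⟨hxΔ, hx2⟩ y ⟨hyΔ, -⟩
    obtain ⟨n, hn⟩ := hrs.crystallographic x hxΔ y hyΔ
    rw [hx2] at hn
    exact ⟨n, by linarith⟩
  have hneg : ∀ x ∈ S, -x ∈ S := by
    rintro x ⟨hxΔ, hx2⟩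
    have := hrs.reflect x hxΔ x hxΔ
    have hc : 2 * ⟪x, x⟫ / ⟪x, x⟫ = 2 := by rw [hx2]; norm_num
    rw [hc] at this
    constructor
    · simpa [two_smul, sub_add_eq_sub_sub] using this
    · simp only [inner_neg_neg, hx2]
  obtain ⟨l, hl, hlsum⟩ := closure_list S hneg _ hQL
  -- evenness gives ⟪α,β⟫ ∈ ℤ
  obtain ⟨k, hk⟩ := listsum_even S (fun x hx => hx.2) hint l hl
  rw [hlsum] at hk
  have hexp : ⟪α - β, α - β⟫ = 2 - 2 * ⟪α, β⟫ := by
    rw [inner_sub_left, inner_sub_right, inner_sub_right, hαshort, hβshort,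
      real_inner_comm α β]; ring
  -- bounds
  have h1 : 0 < ⟪α - β, α - β⟫ := by
    have hnz : ⟪α - β, α - β⟫ ≠ 0 :=
      (inner_self_ne_zero (𝕜 := ℝ)).mpr (sub_ne_zero.mpr hne)
    exact lt_of_le_of_ne real_inner_self_nonneg (Ne.symm hnz)
  have h2 : 0 < ⟪α + β, α + β⟫ := by
    have hab : α + β ≠ 0 := by
      intro h
      exact hne' (by rw [← sub_eq_zero]; simpa [sub_neg_eq_add] using h)
    have hnz : ⟪α + β, α + β⟫ ≠ 0 := (inner_self_ne_zero (𝕜 := ℝ)).mpr hab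
    exact lt_of_le_of_ne real_inner_self_nonneg (Ne.symm hnz)
  have h2' : ⟪α + β, α + β⟫ = 2 + 2 * ⟪α, β⟫ := by
    rw [inner_add_left, inner_add_right, inner_add_right, hαshort, hβshort,
      real_inner_comm α β]; ring
  -- from hk : 2 - 2⟪α,β⟫ = 2k, so ⟪α,β⟫ = 1 - k, and -1 < 1 - k < 1 forces k = 1
  have hk' : ⟪α, β⟫ = 1 - (k : ℝ) := by rw [hexp] at hk; linarith
  have hkb : k = 1 := by
    have hb1 : (1 : ℝ) - k < 1 := by rw [← hk']; linarith [hexp ▸ h1]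
    have hb2 : (-1 : ℝ) < 1 - k := by rw [← hk']; linarith [h2' ▸ h2]
    have : (0 : ℝ) < k := by linarith
    have : (k : ℝ) < 2 := by linarith
    have l1 : 0 < k := by exact_mod_cast ‹(0:ℝ) < k›
    have l2 : k < 2 := by exact_mod_cast ‹(k:ℝ) < 2›
    omega
  have horth : ⟪α, β⟫ = 0 := by rw [hk', hkb]; norm_num
  have hnorm2 : ⟪α - β, α - β⟫ = 2 := by rw [hexp, horth]; ring
  refine ⟨horth, ?_, hnorm2⟩
  have := long_sum_mem hrs l.length l rfl hl (by rw [hlsum]; exact hnorm2)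
  rwa [hlsum] at this
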